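/- For each M ∈ ℕ and each c ∈ (0,1], the set {f ∈ C[0,1] : λ(L_M(f)) ≥ c} is closed in C[0,1] with the sup norm, where λ is Lebesgue measure. -/

import Mathlib

open Set MeasureTheory Filter Topology

theorem stmt2 (M : ℕ) (c : ℝ) (hc : c ∈ Ioc (0:ℝ) 1) :
    IsClosed {f : C(Icc (0:ℝ) 1, ℝ) |
      ENNReal.ofReal c ≤ volume (Subtype.val ''
        {x : Icc (0:ℝ) 1 | ∀ y : Icc (0:ℝ) 1, |f x - f y| ≤ (M : ℝ) * |x.1 - y.1|})} := by
  apply IsSeqClosed.isClosed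
  intro u f hu hlim
  set L : C(Icc (0:ℝ) 1, ℝ) → Set ℝ := fun g => Subtype.val ''
      {x : Icc (0:ℝ) 1 | ∀ y : Icc (0:ℝ) 1, |g x - g y| ≤ (M:ℝ) * |x.1 - y.1|} with hLdef
  have hcompact : ∀ g : C(Icc (0:ℝ) 1, ℝ), IsCompact (L g) := by
    intro g
    apply IsCompact.image _ continuous_subtype_val
    apply IsClosed.isCompact
    have : {x : Icc (0:ℝ) 1 | ∀ y : Icc (0:ℝ) 1, |g x - g y| ≤ (M:ℝ) * |x.1 - y.1|}
        = ⋂ y : Icc (0:ℝ) 1, {x | |g x - g y| ≤ (M:ℝ) * |x.1 - y.1|} := by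
      ext x; simp [mem_iInter]
    rw [this]
    refine isClosed_iInter fun y => isClosed_le ?_ ?_
    · exact (continuous_abs.comp ((map_continuous g).sub continuous_const))
    · exact continuous_const.mul (continuous_abs.comp
        (continuous_subtype_val.sub continuous_const))
  have hsub : ∀ g, L g ⊆ Icc (0:ℝ) 1 := fun g x hx => by
    obtain ⟨x', _, rfl⟩ := hx; exact x'.2
  -- uniform convergence
  have hunif : TendstoUniformly (fun n x => u n x) f atTop :=
    ContinuousMap.tendsto_iff_tendstoUniformly.mp hlim
  -- the decreasing sequence of unions
  set S : ℕ → Set ℝ := fun n => ⋃ k ∈ Ici n, L (u k) with hSdef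
  have hSmeas : ∀ n, MeasurableSet (S n) :=
    fun n => MeasurableSet.biUnion (to_countable _) fun k _ => (hcompact (u k)).measurableSet
  have hSsub : ∀ n, S n ⊆ Icc (0:ℝ) 1 := by
    intro n x hx
    simp only [S, mem_iUnion] at hx
    obtain ⟨k, _, hk⟩ := hx
    exact hsub _ hk
  have hSanti : Antitone S := by
    intro m n hmn
    exact biUnion_subset_biUnion_left (fun k hk => le_trans hmn hk)
  -- key inclusion: ⋂ n, S n ⊆ L f
  have hkey : (⋂ n, S n) ⊆ L f := by
    intro x hx
    have hx1 : x ∈ Icc (0:ℝ) 1 := hSsub 0 (mem_iInter.mp hx 0)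
    refine ⟨⟨x, hx1⟩, ?_, rfl⟩
    intro y
    refine le_of_forall_pos_le_add fun ε hε => ?_
    obtain ⟨N, hN⟩ := (Metric.tendstoUniformly_iff.mp hunif (ε/2) (by positivity)).exists_forall_of_atTop
    have hxN := mem_iInter.mp hx N
    simp only [S, mem_iUnion] at hxN
    obtain ⟨k, hkN, hk⟩ := hxN
    obtain ⟨x', hx', hx'e⟩ := hk
    have hxx' : x' = ⟨x, hx1⟩ := Subtype.ext hx'e
    rw [hxx'] at hx'
    have h1 : dist (f ⟨x, hx1⟩) (u k ⟨x, hx1⟩) < ε/2 := hN k hkN _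
    have h2 : dist (f y) (u k y) < ε/2 := hN k hkN _
    have h3 : |u k ⟨x, hx1⟩ - u k y| ≤ (M:ℝ) * |x - y.1| := hx' y
    have := abs_sub_abs_le_abs_sub (f ⟨x, hx1⟩ - f y) (u k ⟨x, hx1⟩ - u k y)
    calc |f ⟨x, hx1⟩ - f y|
        ≤ |u k ⟨x, hx1⟩ - u k y| + |f ⟨x, hx1⟩ - u k ⟨x, hx1⟩| + |f y - u k y| := by
          rw [abs_sub_comm (f y)]
          have : f ⟨x, hx1⟩ - f y = (u k ⟨x, hx1⟩ - u k y) + (f ⟨x, hx1⟩ - u k ⟨x, hx1⟩) + (u k y - f y) := by ring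
          rw [this]
          refine le_trans (abs_add_le _ _) (add_le_add (abs_add_le _ _) ?_)
          rw [abs_sub_comm]
      _ ≤ (M:ℝ) * |x - y.1| + ε/2 + ε/2 := by
          gcongr
          · exact le_of_lt (by simpa [Real.dist_eq] using h1)
          · exact le_of_lt (by simpa [Real.dist_eq] using h2)
      _ = (M:ℝ) * |x - y.1| + ε := by ring
  -- measure argument
  have hfin : volume (S 0) ≠ ⊤ :=
    (lt_of_le_of_lt (measure_mono (hSsub 0)) (by simp [Real.volume_Icc])).ne
  have hiInf : volume (⋂ n, S n) = ⨅ n, volume (S n) := by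
    refine Directed.measure_iInter (fun n => (hSmeas n).nullMeasurableSet)
      hSanti.directed_ge ⟨0, hfin⟩
  have hc' : ∀ n, ENNReal.ofReal c ≤ volume (S n) := by
    intro n
    refine le_trans (hu n) (measure_mono ?_)
    exact fun x hx => mem_biUnion (mem_Ici.mpr le_rfl) hx
  calc ENNReal.ofReal c ≤ ⨅ n, volume (S n) := le_iInf hc'
    _ = volume (⋂ n, S n) := hiInf.symm
    _ ≤ _ := measure_mono hkey
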